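/- The Donnelly–Tavaré age-ordered sampling formula is the size-biased version of the Ewens sampling formula: for every integer n ≥ 1, every real θ > 0, and every vector (a_1,…,a_n) of non-negative integers with Σ_{i=1}^n i·a_i = n and Σ_{i=1}^n a_i = k, summing the quantity θ^k·(n−1)! / (S_n(θ)·n_k·(n_k+n_{k−1})·(n_k+n_{k−1}+n_{k−2})⋯(n_k+n_{k−1}+⋯+n_2)) over all ordered sequences (n_1, n_2, …, n_k) of positive integers such that for each i the number of indices j with n_j = i equals a_i, yields ESF_{n,θ}(a). -/

import Mathlib

open Finset

/-- The rising factorial `S_n(θ) = θ(θ+1)⋯(θ+n−1)`. -/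
noncomputable def risingFac (θ : ℝ) (n : ℕ) : ℝ := ∏ j ∈ Finset.range n, (θ + j)

/-- The Ewens sampling formula weight of a partition of `n` encoded by a vector
`a : Fin n → ℕ`, where `a i` is the number of parts equal to `i+1`. -/
noncomputable def ESF (n : ℕ) (θ : ℝ) (a : Fin n → ℕ) : ℝ :=
  (Nat.factorial n : ℝ) * θ ^ (∑ i, a i) /
    ((∏ i : Fin n, ((i.1 + 1 : ℝ) ^ (a i) * (Nat.factorial (a i) : ℝ))) * risingFac θ n)

/-- The finite set of all vectors `(a_1, …, a_n)` of non-negative integers with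
`Σ_{i=1}^n i·a_i = n` (each entry is at most `n`, so this filtered set captures all of them). -/
def partitionVectors (n : ℕ) : Finset (Fin n → ℕ) :=
  (Fintype.piFinset fun _ : Fin n => Finset.range (n + 1)).filter
    fun a => ∑ i : Fin n, (i.1 + 1) * a i = n


section Aux

/-- extension of a `Fin k`-indexed function to `ℕ` by zero -/
def fext {k : ℕ} (f : Fin k → ℕ) : ℕ → ℕ := fun t => if h : t < k then f ⟨t, h⟩ else 0

def tailSum {k : ℕ} (f : Fin k → ℕ) (m : ℕ) : ℕ := ∑ t ∈ Finset.Ico m k, fext f t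

def listings (k : ℕ) (s : Multiset ℕ) : Finset (Fin k → ℕ) :=
  (Fintype.piFinset fun _ : Fin k => s.toFinset).filter
    fun f => (Multiset.map f Finset.univ.val) = s

lemma mem_listings {k : ℕ} {s : Multiset ℕ} {f : Fin k → ℕ} :
    f ∈ listings k s ↔ Multiset.map f Finset.univ.val = s := by
  simp only [listings, Finset.mem_filter, Fintype.mem_piFinset, Multiset.mem_toFinset,
    and_iff_right_iff_imp]
  intro h j
  rw [← h]
  exact Multiset.mem_map_of_mem f (Finset.mem_univ_val _)

lemma sum_of_listings {k : ℕ} {s : Multiset ℕ} {f : Fin k → ℕ}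
    (hf : f ∈ listings k s) : ∑ j, f j = s.sum := by
  rw [← mem_listings.mp hf]; rfl

lemma tailSum_zero {k : ℕ} (f : Fin k → ℕ) : tailSum f 0 = ∑ j, f j := by
  rw [tailSum, show Finset.Ico 0 k = Finset.range k from by rw [Finset.range_eq_Ico],
    ← Fin.sum_univ_eq_sum_range (fun i => fext f i) k]
  apply Finset.sum_congr rfl
  intro i _
  simp [fext, i.isLt]

lemma tailSum_succ {k : ℕ} (f : Fin (k + 1) → ℕ) (m : ℕ) :
    tailSum f (m + 1) = tailSum (fun j => f j.succ) m := by
  rw [tailSum, tailSum, Finset.sum_Ico_eq_sum_range, Finset.sum_Ico_eq_sum_range,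
    Nat.succ_sub_succ]
  apply Finset.sum_congr rfl
  intro i _
  by_cases h : m + i < k
  · rw [fext, fext, dif_pos h, dif_pos (by omega : m + 1 + i < k + 1)]
    congr 1
    apply Fin.ext
    simp only [Fin.val_succ]
    omega
  · rw [fext, fext, dif_neg h, dif_neg (by omega)]

lemma tailSum_pos {k : ℕ} {s : Multiset ℕ} {f : Fin k → ℕ}
    (hs : ∀ v ∈ s, 0 < v) (hf : f ∈ listings k s) {m : ℕ} (hm : m < k) :
    0 < tailSum f m := by
  have hmem : m ∈ Finset.Ico m k := Finset.mem_Ico.mpr ⟨le_refl _, hm⟩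
  have h1 : 0 < fext f m := by
    rw [fext, dif_pos hm]
    apply hs
    rw [← mem_listings.mp hf]
    exact Multiset.mem_map_of_mem f (Finset.mem_univ_val _)
  calc 0 < fext f m := h1
    _ ≤ tailSum f m := Finset.single_le_sum (fun i _ => Nat.zero_le _) hmem

end Aux

section Key

lemma count_mul_D_erase {s : Multiset ℕ} {v : ℕ} (hv : v ∈ s) :
    (s.count v : ℝ) * ∏ w ∈ (s.erase v).toFinset, (Nat.factorial ((s.erase v).count w) : ℝ)
      = ∏ w ∈ s.toFinset, (Nat.factorial (s.count w) : ℝ) := by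
  have hsub : (s.erase v).toFinset ⊆ s.toFinset := by
    intro w hw
    rw [Multiset.mem_toFinset] at *
    exact Multiset.mem_of_mem_erase hw
  have hext : ∏ w ∈ (s.erase v).toFinset, (Nat.factorial ((s.erase v).count w) : ℝ)
      = ∏ w ∈ s.toFinset, (Nat.factorial ((s.erase v).count w) : ℝ) := by
    apply Finset.prod_subset hsub
    intro w _ hw
    rw [Multiset.mem_toFinset] at hw
    rw [Multiset.count_eq_zero_of_notMem hw]
    simp
  rw [hext]
  have hvT : v ∈ s.toFinset := Multiset.mem_toFinset.mpr hv
  rw [← Finset.mul_prod_erase _ _ hvT, ← Finset.mul_prod_erase _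
    (fun w => (Nat.factorial (s.count w) : ℝ)) hvT]
  have hco : ∀ w ∈ s.toFinset.erase v, (s.erase v).count w = s.count w := by
    intro w hw
    exact Multiset.count_erase_of_ne (Finset.ne_of_mem_erase hw) s
  rw [Finset.prod_congr rfl (fun w hw => by rw [hco w hw])]
  rw [Multiset.count_erase_self, ← mul_assoc]
  congr 1
  have hpos : 0 < s.count v := Multiset.count_pos.mpr hv
  rw [← Nat.cast_mul, Nat.mul_factorial_pred hpos.ne']

lemma key : ∀ (k : ℕ) (s : Multiset ℕ), (∀ v ∈ s, 0 < v) → Multiset.card s = k →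
    ∑ f ∈ listings k s, ∏ m ∈ Finset.range k, ((tailSum f m : ℕ) : ℝ)⁻¹
      = ((s.prod : ℝ))⁻¹ * (∏ v ∈ s.toFinset, (Nat.factorial (s.count v) : ℝ))⁻¹ := by
  intro k
  induction k with
  | zero =>
    intro s hs hcard
    have hs0 : s = 0 := Multiset.card_eq_zero.mp hcard
    subst hs0
    have : listings 0 (0 : Multiset ℕ) = {(fun j => j.elim0 : Fin 0 → ℕ)} := by
      ext f
      simp only [mem_listings, Finset.mem_singleton]
      constructor
      · intro _; funext j; exact j.elim0
      · intro _; rfl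
    rw [this]
    simp
  | succ k ih =>
    intro s hs hcard
    have hsne : s ≠ 0 := by
      intro h; rw [h] at hcard; simp at hcard
    have hsum_pos : 0 < s.sum := by
      obtain ⟨v, hv⟩ := Multiset.exists_mem_of_ne_zero hsne
      calc 0 < v := hs v hv
        _ ≤ s.sum := Multiset.single_le_sum (fun x hx => (hs x hx).le) v hv
    -- reindex
    have reind : ∑ f ∈ listings (k+1) s, ∏ m ∈ Finset.range (k+1), ((tailSum f m : ℕ) : ℝ)⁻¹
        = ∑ p ∈ s.toFinset.sigma (fun v => listings k (s.erase v)),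
            ((s.sum : ℝ))⁻¹ * ∏ m ∈ Finset.range k, ((tailSum p.2 m : ℕ) : ℝ)⁻¹ := by
      apply Finset.sum_nbij' (i := fun f => (⟨f 0, fun j : Fin k => f j.succ⟩ : Σ _ : ℕ, (Fin k → ℕ)))
        (j := fun p => Fin.cons p.1 p.2)
      · intro f hf
        have hmap := mem_listings.mp hf
        have hmap' : Multiset.map f Finset.univ.val = f 0 ::ₘ Multiset.map (fun j : Fin k => f j.succ) Finset.univ.val := by
          rw [Fin.univ_succ]
          simp only [Finset.cons_val, Multiset.map_cons, Finset.map_val, Multiset.map_map]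
          rfl
        rw [Finset.mem_sigma]
        constructor
        · rw [Multiset.mem_toFinset, ← hmap]
          exact Multiset.mem_map_of_mem f (Finset.mem_univ_val _)
        · rw [mem_listings]
          rw [← hmap, hmap', Multiset.erase_cons_head]
      · intro p hp
        rw [Finset.mem_sigma] at hp
        obtain ⟨hv, hg⟩ := hp
        rw [Multiset.mem_toFinset] at hv
        rw [mem_listings] at hg ⊢
        have : Multiset.map (Fin.cons p.1 p.2) Finset.univ.val
            = p.1 ::ₘ Multiset.map (fun j : Fin k => (Fin.cons p.1 p.2 : Fin (k+1) → ℕ) j.succ) Finset.univ.val := by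
          rw [Fin.univ_succ]
          simp only [Finset.cons_val, Multiset.map_cons, Finset.map_val, Multiset.map_map]
          rfl
        rw [this]
        simp only [Fin.cons_succ]
        rw [hg, Multiset.cons_erase hv]
      · intro f _
        exact funext (Fin.cases rfl (fun i => rfl))
      · intro p _
        simp only [Fin.cons_zero, Fin.cons_succ]
      · intro f hf
        rw [Finset.prod_range_succ']
        have h0 : tailSum f 0 = s.sum := by
          rw [tailSum_zero]; exact sum_of_listings hf
        rw [h0, mul_comm]
        congr 1
        apply Finset.prod_congr rfl
        intro m _
        rw [tailSum_succ]
    rw [reind, Finset.sum_sigma]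
    have inner : ∀ v ∈ s.toFinset,
        (∑ g ∈ listings k (s.erase v),
          ((s.sum : ℝ))⁻¹ * ∏ m ∈ Finset.range k, ((tailSum g m : ℕ) : ℝ)⁻¹)
        = ((s.sum : ℝ))⁻¹ * (((v : ℝ) * s.count v) * (((s.prod : ℝ))⁻¹ *
            (∏ w ∈ s.toFinset, (Nat.factorial (s.count w) : ℝ))⁻¹)) := by
      intro v hv
      rw [Multiset.mem_toFinset] at hv
      rw [← Finset.mul_sum]
      congr 1
      have herase_pos : ∀ w ∈ s.erase v, 0 < w :=
        fun w hw => hs w (Multiset.mem_of_mem_erase hw)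
      have herase_card : Multiset.card (s.erase v) = k := by
        rw [Multiset.card_erase_of_mem hv, hcard]; rfl
      rw [ih (s.erase v) herase_pos herase_card]
      -- rewrite RHS
      have h1 : (v : ℝ) * ((s.erase v).prod : ℝ) = (s.prod : ℝ) := by
        rw [← Nat.cast_mul, Multiset.prod_erase hv]
      have h2 := count_mul_D_erase hv
      have hvne : (v : ℝ) ≠ 0 := Nat.cast_ne_zero.mpr (hs v hv).ne'
      have hcne : (s.count v : ℝ) ≠ 0 := Nat.cast_ne_zero.mpr (Multiset.count_pos.mpr hv).ne'
      have hprod_ne : ((s.erase v).prod : ℝ) ≠ 0 := by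
        rw [Nat.cast_ne_zero]
        exact Multiset.prod_pos (fun x hx => herase_pos x hx) |>.ne'
      have hD_ne : (∏ w ∈ (s.erase v).toFinset, (Nat.factorial ((s.erase v).count w) : ℝ)) ≠ 0 :=
        Finset.prod_ne_zero_iff.mpr (fun w _ => Nat.cast_ne_zero.mpr (Nat.factorial_ne_zero _))
      rw [← h1, ← h2, mul_inv, mul_inv]
      rw [show (v:ℝ) * (s.count v : ℝ) *
          (((v:ℝ)⁻¹ * ((s.erase v).prod : ℝ)⁻¹) *
            ((s.count v : ℝ)⁻¹ * (∏ w ∈ (s.erase v).toFinset,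
              (Nat.factorial ((s.erase v).count w) : ℝ))⁻¹))
          = ((v:ℝ) * (v:ℝ)⁻¹) * ((s.count v : ℝ) * (s.count v : ℝ)⁻¹) *
            (((s.erase v).prod : ℝ)⁻¹ * (∏ w ∈ (s.erase v).toFinset,
              (Nat.factorial ((s.erase v).count w) : ℝ))⁻¹) from by ring]
      rw [mul_inv_cancel₀ hvne, mul_inv_cancel₀ hcne, one_mul, one_mul]
    rw [Finset.sum_congr rfl inner]
    rw [← Finset.mul_sum, ← Finset.sum_mul]
    have hsum_eq : ∑ v ∈ s.toFinset, (v : ℝ) * (s.count v : ℝ) = (s.sum : ℝ) := by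
      have := Finset.sum_multiset_map_count s (fun x => x)
      rw [Multiset.map_id'] at this
      rw [this]
      push_cast
      apply Finset.sum_congr rfl
      intro v _
      rw [smul_eq_mul]
      push_cast
      ring
    rw [hsum_eq, ← mul_assoc, inv_mul_cancel₀ (by positivity), one_mul]

end Key

section Bridge

lemma card_finsetSum {ι : Type*} (t : Finset ι) (m : ι → Multiset ℕ) :
    Multiset.card (∑ i ∈ t, m i) = ∑ i ∈ t, Multiset.card (m i) := by
  induction t using Finset.cons_induction with
  | empty => simp
  | cons a t hat ih => simp [Finset.sum_cons, ih]

lemma count_map_univ {k : ℕ} (v : ℕ) (f : Fin k → ℕ) :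
    Multiset.count v (Multiset.map f Finset.univ.val)
      = (Finset.univ.filter fun j => f j = v).card := by
  rw [Multiset.count_map]
  simp [Finset.card, Finset.filter, eq_comm]

end Bridge

theorem donnelly_tavare_age_ordered_sampling (n : ℕ) (hn : 1 ≤ n) (θ : ℝ) (hθ : 0 < θ)
    (a : Fin n → ℕ) (ha : ∑ i : Fin n, (i.1 + 1) * a i = n)
    (k : ℕ) (hak : ∑ i, a i = k) :
    ∑ f ∈ (Fintype.piFinset fun _ : Fin k => Finset.Icc 1 n).filter
        (fun f => (∀ j, 1 ≤ f j) ∧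
          ∀ i : Fin n, (Finset.univ.filter fun j : Fin k => f j = i.1 + 1).card = a i),
      θ ^ k * (Nat.factorial (n - 1) : ℝ) /
        (risingFac θ n *
          ∏ m ∈ Finset.Ico 1 k,
            ((∑ t ∈ Finset.Ico m k, (fun t : ℕ => if h : t < k then f ⟨t, h⟩ else 0) t : ℕ) : ℝ)) =
      ESF n θ a := by
  set s : Multiset ℕ := ∑ i : Fin n, Multiset.replicate (a i) (i.1 + 1) with hs_def
  -- basic facts about s
  have hmem_s : ∀ v ∈ s, 1 ≤ v ∧ v ≤ n := by
    intro v hv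
    rw [hs_def, Multiset.mem_sum] at hv
    obtain ⟨i, _, hvi⟩ := hv
    have := Multiset.eq_of_mem_replicate hvi
    subst this
    exact ⟨Nat.succ_le_succ (Nat.zero_le _), i.isLt⟩
  have hpos : ∀ v ∈ s, 0 < v := fun v hv => (hmem_s v hv).1
  have hcount : ∀ i : Fin n, s.count (i.1 + 1) = a i := by
    intro i
    rw [hs_def, Multiset.count_sum']
    rw [Finset.sum_eq_single i]
    · rw [Multiset.count_replicate, if_pos rfl]
    · intro j _ hji
      rw [Multiset.count_replicate, if_neg]
      intro h
      exact hji (Fin.ext (by omega)).symm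
    · intro h
      exact absurd (Finset.mem_univ i) h
  have hcount0 : ∀ v : ℕ, v = 0 ∨ n < v → s.count v = 0 := by
    intro v hv
    rw [hs_def, Multiset.count_sum']
    apply Finset.sum_eq_zero
    intro i _
    rw [Multiset.count_replicate, if_neg]
    intro h
    have := i.isLt
    omega
  have hcard : Multiset.card s = k := by
    rw [hs_def, card_finsetSum]
    simp [hak]
  have hsum : s.sum = n := by
    rw [hs_def, Multiset.sum_sum,
      Finset.sum_congr rfl (fun (i : Fin n) _ => by
        rw [Multiset.sum_replicate, smul_eq_mul, mul_comm])]
    exact ha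
  have hk : 0 < k := by
    rcases Nat.eq_zero_or_pos k with hk0 | hk0
    · exfalso
      rw [hk0] at hak
      have : ∀ i, a i = 0 := by
        intro i
        exact (Finset.sum_eq_zero_iff.mp hak) i (Finset.mem_univ i)
      rw [Finset.sum_congr rfl (fun i _ => by rw [this i, Nat.mul_zero])] at ha
      simp at ha
      omega
    · exact hk0
  -- the index set equals `listings k s`
  have hset : (Fintype.piFinset fun _ : Fin k => Finset.Icc 1 n).filter
        (fun f => (∀ j, 1 ≤ f j) ∧
          ∀ i : Fin n, (Finset.univ.filter fun j : Fin k => f j = i.1 + 1).card = a i)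
      = listings k s := by
    ext f
    rw [Finset.mem_filter, Fintype.mem_piFinset, mem_listings]
    constructor
    · rintro ⟨h1, _, h3⟩
      ext v
      rw [count_map_univ]
      rcases Nat.eq_zero_or_pos v with hv0 | hv0
      · subst hv0
        rw [hcount0 0 (Or.inl rfl)]
        rw [Finset.card_eq_zero, Finset.filter_eq_empty_iff]
        intro j _
        have := h1 j
        rw [Finset.mem_Icc] at this
        omega
      · rcases Nat.lt_or_ge n v with hvn | hvn
        · rw [hcount0 v (Or.inr hvn)]
          rw [Finset.card_eq_zero, Finset.filter_eq_empty_iff]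
          intro j _
          have := h1 j
          rw [Finset.mem_Icc] at this
          omega
        · have hlt : v - 1 < n := by omega
          have hv : v = (⟨v - 1, hlt⟩ : Fin n).1 + 1 := by simp; omega
          rw [hv, hcount ⟨v - 1, hlt⟩, h3 ⟨v - 1, hlt⟩]
    · intro h
      have hmemf : ∀ j, f j ∈ s := by
        intro j
        rw [← h]
        exact Multiset.mem_map_of_mem f (Finset.mem_univ_val _)
      have h1 : ∀ j, f j ∈ Finset.Icc 1 n := by
        intro j
        rw [Finset.mem_Icc]
        exact hmem_s _ (hmemf j)
      refine ⟨h1, fun j => (hmem_s _ (hmemf j)).1, ?_⟩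
      intro i
      rw [← count_map_univ, h, hcount]
  rw [hset]
  -- rewrite each summand
  have hR : 0 < risingFac θ n := by
    rw [risingFac]
    apply Finset.prod_pos
    intro j _
    positivity
  have hnR : (n : ℝ) ≠ 0 := Nat.cast_ne_zero.mpr (by omega)
  have hsummand : ∀ f ∈ listings k s,
      θ ^ k * (Nat.factorial (n - 1) : ℝ) /
        (risingFac θ n *
          ∏ m ∈ Finset.Ico 1 k,
            ((∑ t ∈ Finset.Ico m k, (fun t : ℕ => if h : t < k then f ⟨t, h⟩ else 0) t : ℕ) : ℝ))
      = (θ ^ k * (Nat.factorial (n - 1) : ℝ) * n / risingFac θ n) *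
          ∏ m ∈ Finset.range k, ((tailSum f m : ℕ) : ℝ)⁻¹ := by
    intro f hf
    have hT : ∀ m, (∑ t ∈ Finset.Ico m k, (fun t : ℕ => if h : t < k then f ⟨t, h⟩ else 0) t : ℕ)
        = tailSum f m := fun m => rfl
    simp only [hT]
    have hT0 : tailSum f 0 = n := by
      rw [tailSum_zero, sum_of_listings hf, hsum]
    have hprod_split : ∏ m ∈ Finset.range k, ((tailSum f m : ℕ) : ℝ)
        = (n : ℝ) * ∏ m ∈ Finset.Ico 1 k, ((tailSum f m : ℕ) : ℝ) := by
      rw [Finset.range_eq_Ico, Finset.prod_eq_prod_Ico_succ_bot hk, hT0]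
    have hQne : (∏ m ∈ Finset.Ico 1 k, ((tailSum f m : ℕ) : ℝ)) ≠ 0 := by
      apply Finset.prod_ne_zero_iff.mpr
      intro m hm
      rw [Finset.mem_Ico] at hm
      exact Nat.cast_ne_zero.mpr (tailSum_pos hpos hf hm.2).ne'
    rw [Finset.prod_inv_distrib, hprod_split]
    field_simp
  rw [Finset.sum_congr rfl hsummand, ← Finset.mul_sum, key k s hpos hcard]
  -- compute the pieces of ESF
  have hprodN : s.prod = ∏ i : Fin n, (i.1 + 1) ^ (a i) := by
    rw [hs_def, Multiset.prod_sum]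
    exact Finset.prod_congr rfl (fun i _ => Multiset.prod_replicate _ _)
  have hprodcast : ((s.prod : ℕ) : ℝ) = ∏ i : Fin n, ((i.1 + 1 : ℝ)) ^ (a i) := by
    rw [hprodN]
    push_cast
    rfl
  have hD : (∏ v ∈ s.toFinset, (Nat.factorial (s.count v) : ℝ))
      = ∏ i : Fin n, (Nat.factorial (a i) : ℝ) := by
    have hsub : s.toFinset ⊆ Finset.image (fun i : Fin n => i.1 + 1) Finset.univ := by
      intro v hv
      rw [Multiset.mem_toFinset] at hv
      obtain ⟨h1, h2⟩ := hmem_s v hv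
      rw [Finset.mem_image]
      exact ⟨⟨v - 1, by omega⟩, Finset.mem_univ _, by simp; omega⟩
    rw [Finset.prod_subset hsub (fun v _ hv => by
      rw [Multiset.count_eq_zero_of_notMem (fun hm => hv (Multiset.mem_toFinset.mpr hm))]
      simp)]
    rw [Finset.prod_image (by intro i _ j _ h; exact Fin.ext (by have h' : i.1 + 1 = j.1 + 1 := h; omega))]
    exact Finset.prod_congr rfl (fun i _ => by rw [hcount i])
  rw [ESF, hak, Finset.prod_mul_distrib, ← hprodcast, hD]
  have hfact : ((n : ℝ)) * ((Nat.factorial (n - 1) : ℕ) : ℝ) = ((Nat.factorial n : ℕ) : ℝ) := by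
    rw [← Nat.cast_mul, Nat.mul_factorial_pred (by omega)]
  have hPne : ((s.prod : ℕ) : ℝ) ≠ 0 := by
    rw [Nat.cast_ne_zero]
    exact (Multiset.prod_pos (fun x hx => hpos x hx)).ne'
  have hDne : (∏ i : Fin n, (Nat.factorial (a i) : ℝ)) ≠ 0 :=
    Finset.prod_ne_zero_iff.mpr (fun i _ => Nat.cast_ne_zero.mpr (Nat.factorial_ne_zero _))
  rw [show θ ^ k * ((Nat.factorial (n - 1) : ℕ) : ℝ) * n = ((Nat.factorial n : ℕ) : ℝ) * θ ^ k from by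
    rw [← hfact]; ring]
  field_simp
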